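/- Suppose A,B,C,D are not coplanar, write A=(a₁,a₂,a₃), B=(b₁,b₂,b₃), C=(c₁,c₂,c₃), D=(d₁,d₂,d₃), and let Δ = det[[a₁−b₁, a₂−b₂, a₃−b₃],[a₁−c₁, a₂−c₂, a₃−c₃],[a₁−d₁, a₂−d₂, a₃−d₃]]. If (X,Y) is a solution of System (*), then (det[[Γ_B(Y)−Γ_A(Y), a₂−b₂, a₃−b₃],[Γ_C(Y)−Γ_A(Y), a₂−c₂, a₃−c₃],[Γ_D(Y)−Γ_A(Y), a₂−d₂, a₃−d₃]] − 2Δa₁)² + (det[[a₁−b₁, Γ_B(Y)−Γ_A(Y), a₃−b₃],[a₁−c₁, Γ_C(Y)−Γ_A(Y), a₃−c₃],[a₁−d₁, Γ_D(Y)−Γ_A(Y), a₃−d₃]] − 2Δa₂)² + (det[[a₁−b₁, a₂−b₂, Γ_B(Y)−Γ_A(Y)],[a₁−c₁, a₂−c₂, Γ_C(Y)−Γ_A(Y)],[a₁−d₁, a₂−d₂, Γ_D(Y)−Γ_A(Y)]] − 2Δa₃)² − 4Δ²(Γ_A(Y)+‖A‖²) = 0. (At any solution k_T‖Y−T‖²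 > 1 for all T, so each Γ_T(Y) is defined.) -/

import Mathlib

noncomputable section

/-- The Euclidean space ℝ³. -/
abbrev E3 := EuclideanSpace ℝ (Fin 3)

/-- `kc Xs Ys T` is the constant `k_T = 1/‖X*−T‖² + 1/‖Y*−T‖²`. -/
def kc (Xs Ys T : E3) : ℝ := 1 / ‖Xs - T‖ ^ 2 + 1 / ‖Ys - T‖ ^ 2

/-- `(X, Y)` is a solution of System (*). -/
def IsSol (A B C D E F Xs Ys X Y : E3) : Prop :=
  ∀ T ∈ ({A, B, C, D, E, F} : Set E3),
    X ≠ T ∧ Y ≠ T ∧ 1 / ‖X - T‖ ^ 2 + 1 / ‖Y - T‖ ^ 2 = kc Xs Ys T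

/-- Condition (i): no four of the six points `A,B,C,D,E,F` are coplanar. -/
def CondI (A B C D E F : E3) : Prop :=
  ∀ T₁ T₂ T₃ T₄ : E3,
    T₁ ∈ ({A, B, C, D, E, F} : Set E3) → T₂ ∈ ({A, B, C, D, E, F} : Set E3) →
    T₃ ∈ ({A, B, C, D, E, F} : Set E3) → T₄ ∈ ({A, B, C, D, E, F} : Set E3) →
    T₁ ≠ T₂ → T₁ ≠ T₃ → T₁ ≠ T₄ → T₂ ≠ T₃ → T₂ ≠ T₄ → T₃ ≠ T₄ →
    ¬ Coplanar ℝ ({T₁, T₂, T₃, T₄} : Set E3)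

/-- Condition (ii): no four of the six spheres of center `T` and radius `1/√k_T`
share a common point of ℝ³. -/
def CondII (A B C D E F Xs Ys : E3) : Prop :=
  ∀ T₁ T₂ T₃ T₄ : E3,
    T₁ ∈ ({A, B, C, D, E, F} : Set E3) → T₂ ∈ ({A, B, C, D, E, F} : Set E3) →
    T₃ ∈ ({A, B, C, D, E, F} : Set E3) → T₄ ∈ ({A, B, C, D, E, F} : Set E3) →
    T₁ ≠ T₂ → T₁ ≠ T₃ → T₁ ≠ T₄ → T₂ ≠ T₃ → T₂ ≠ T₄ → T₃ ≠ T₄ →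
    ¬ ∃ P : E3,
        ‖P - T₁‖ ^ 2 = 1 / kc Xs Ys T₁ ∧ ‖P - T₂‖ ^ 2 = 1 / kc Xs Ys T₂ ∧
        ‖P - T₃‖ ^ 2 = 1 / kc Xs Ys T₃ ∧ ‖P - T₄‖ ^ 2 = 1 / kc Xs Ys T₄

/-- `Γ_T(Y) = ‖Y−T‖²/(k_T‖Y−T‖² − 1) − ‖T‖²`. -/
def Gamma (Xs Ys T Y : E3) : ℝ :=
  ‖Y - T‖ ^ 2 / (kc Xs Ys T * ‖Y - T‖ ^ 2 - 1) - ‖T‖ ^ 2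
lemma norm_sq3 (v : E3) : ‖v‖ ^ 2 = v 0 ^ 2 + v 1 ^ 2 + v 2 ^ 2 := by
  rw [EuclideanSpace.norm_eq, Real.sq_sqrt (by positivity)]
  simp [Fin.sum_univ_three, sq_abs]

lemma gamma_key (Xs Ys T X Y : E3) (hX : X ≠ T) (hY : Y ≠ T)
    (heq : 1 / ‖X - T‖ ^ 2 + 1 / ‖Y - T‖ ^ 2 = kc Xs Ys T) :
    kc Xs Ys T * ‖Y - T‖ ^ 2 > 1 ∧ Gamma Xs Ys T Y = ‖X - T‖ ^ 2 - ‖T‖ ^ 2 := by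
  have hu : (0:ℝ) < ‖X - T‖ ^ 2 :=
    pow_pos (norm_pos_iff.mpr (sub_ne_zero.mpr hX)) 2
  have hw : (0:ℝ) < ‖Y - T‖ ^ 2 :=
    pow_pos (norm_pos_iff.mpr (sub_ne_zero.mpr hY)) 2
  have h1 : kc Xs Ys T * ‖Y - T‖ ^ 2 - 1 = ‖Y - T‖ ^ 2 / ‖X - T‖ ^ 2 := by
    rw [← heq, add_mul, one_div_mul_eq_div, one_div_mul_eq_div, div_self hw.ne']; ring
  constructor
  · have : (0:ℝ) < ‖Y - T‖ ^ 2 / ‖X - T‖ ^ 2 := div_pos hw hu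
    linarith [h1]
  · unfold Gamma
    rw [h1]
    rw [div_div_eq_mul_div, mul_comm, mul_div_assoc, div_self hw.ne', mul_one]


lemma cramer0 (p q r s t u v w z x0 x1 x2 : ℝ) :
    Matrix.det !![2*(p*x0+q*x1+r*x2), q, r;
                  2*(s*x0+t*x1+u*x2), t, u;
                  2*(v*x0+w*x1+z*x2), w, z]
      = 2 * Matrix.det !![p, q, r; s, t, u; v, w, z] * x0 := by
  simp [Matrix.det_fin_three]
  ring

lemma cramer1 (p q r s t u v w z x0 x1 x2 : ℝ) :
    Matrix.det !![p, 2*(p*x0+q*x1+r*x2), r;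
                  s, 2*(s*x0+t*x1+u*x2), u;
                  v, 2*(v*x0+w*x1+z*x2), z]
      = 2 * Matrix.det !![p, q, r; s, t, u; v, w, z] * x1 := by
  simp [Matrix.det_fin_three]
  ring

lemma cramer2 (p q r s t u v w z x0 x1 x2 : ℝ) :
    Matrix.det !![p, q, 2*(p*x0+q*x1+r*x2);
                  s, t, 2*(s*x0+t*x1+u*x2);
                  v, w, 2*(v*x0+w*x1+z*x2)]
      = 2 * Matrix.det !![p, q, r; s, t, u; v, w, z] * x2 := by
  simp [Matrix.det_fin_three]
  ring

set_option maxHeartbeats 4000000 in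
/-- At any solution (X,Y) of System (*) (with A,B,C,D not coplanar), the quantity
Ψ_{E,F}(Y) built from Γ_A(Y),…,Γ_D(Y) vanishes. -/
theorem psi_EF_vanishes (A B C D E F Xs Ys : E3)
    (hdist : List.Pairwise (· ≠ ·) [A, B, C, D, E, F, Xs, Ys])
    (hnc : ¬ Coplanar ℝ ({A, B, C, D} : Set E3))
    (Δ : ℝ)
    (hΔ : Δ = Matrix.det !![A 0 - B 0, A 1 - B 1, A 2 - B 2;
                            A 0 - C 0, A 1 - C 1, A 2 - C 2;
                            A 0 - D 0, A 1 - D 1, A 2 - D 2])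
    (X Y : E3) (hsol : IsSol A B C D E F Xs Ys X Y) :
    (∀ T ∈ ({A, B, C, D, E, F} : Set E3), kc Xs Ys T * ‖Y - T‖ ^ 2 > 1) ∧
    (Matrix.det
        !![Gamma Xs Ys B Y - Gamma Xs Ys A Y, A 1 - B 1, A 2 - B 2;
           Gamma Xs Ys C Y - Gamma Xs Ys A Y, A 1 - C 1, A 2 - C 2;
           Gamma Xs Ys D Y - Gamma Xs Ys A Y, A 1 - D 1, A 2 - D 2]
        - 2 * Δ * A 0) ^ 2 +
    (Matrix.det
        !![A 0 - B 0, Gamma Xs Ys B Y - Gamma Xs Ys A Y, A 2 - B 2;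
           A 0 - C 0, Gamma Xs Ys C Y - Gamma Xs Ys A Y, A 2 - C 2;
           A 0 - D 0, Gamma Xs Ys D Y - Gamma Xs Ys A Y, A 2 - D 2]
        - 2 * Δ * A 1) ^ 2 +
    (Matrix.det
        !![A 0 - B 0, A 1 - B 1, Gamma Xs Ys B Y - Gamma Xs Ys A Y;
           A 0 - C 0, A 1 - C 1, Gamma Xs Ys C Y - Gamma Xs Ys A Y;
           A 0 - D 0, A 1 - D 1, Gamma Xs Ys D Y - Gamma Xs Ys A Y]
        - 2 * Δ * A 2) ^ 2
    - 4 * Δ ^ 2 * (Gamma Xs Ys A Y + ‖A‖ ^ 2) = 0 := by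
  have key : ∀ T ∈ ({A, B, C, D, E, F} : Set E3),
      kc Xs Ys T * ‖Y - T‖ ^ 2 > 1 ∧ Gamma Xs Ys T Y = ‖X - T‖ ^ 2 - ‖T‖ ^ 2 := by
    intro T hT
    obtain ⟨hX, hY, heq⟩ := hsol T hT
    exact gamma_key Xs Ys T X Y hX hY heq
  refine ⟨fun T hT => (key T hT).1, ?_⟩
  have hA := (key A (by simp)).2
  have hB := (key B (by simp)).2
  have hC := (key C (by simp)).2
  have hD := (key D (by simp)).2
  have sub_apply : ∀ (u v : E3) (i : Fin 3), (u - v) i = u i - v i := fun u v i => rfl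
  have hgB : Gamma Xs Ys B Y - Gamma Xs Ys A Y
      = 2 * ((A 0 - B 0) * X 0 + (A 1 - B 1) * X 1 + (A 2 - B 2) * X 2) := by
    rw [hA, hB, norm_sq3, norm_sq3, norm_sq3, norm_sq3, sub_apply, sub_apply, sub_apply,
      sub_apply, sub_apply, sub_apply]; ring
  have hgC : Gamma Xs Ys C Y - Gamma Xs Ys A Y
      = 2 * ((A 0 - C 0) * X 0 + (A 1 - C 1) * X 1 + (A 2 - C 2) * X 2) := by
    rw [hA, hC, norm_sq3, norm_sq3, norm_sq3, norm_sq3, sub_apply, sub_apply, sub_apply,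
      sub_apply, sub_apply, sub_apply]; ring
  have hgD : Gamma Xs Ys D Y - Gamma Xs Ys A Y
      = 2 * ((A 0 - D 0) * X 0 + (A 1 - D 1) * X 1 + (A 2 - D 2) * X 2) := by
    rw [hA, hD, norm_sq3, norm_sq3, norm_sq3, norm_sq3, sub_apply, sub_apply, sub_apply,
      sub_apply, sub_apply, sub_apply]; ring
  rw [hgB, hgC, hgD, hA, hΔ, cramer0, cramer1, cramer2, norm_sq3 (X - A), norm_sq3 A,
    sub_apply, sub_apply, sub_apply]
  ring
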